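/- With the setup of the Lie–Poisson bracket on R = ℂ[X_{m,i,j}], distinct points p_1, …, p_n, the residue matrices φ_m with entries X_{m,i,j}, P(z) = Π_i (z − p_i), and Φ(z) = Σ_m φ_m · Π_{j≠m}(z − p_j) ∈ M_r(R[z]): every entry of the matrix P(w)·Φ(z) − P(z)·Φ(w) ∈ M_r(R[z,w]) is divisible by (w − z), and if D(z,w) ∈ M_r(R[z,w]) denotes the entrywise quotient, then for all indices i, j, k, l, one has {Φ(z)_{ij}, Φ(w)_{kl}} = δ_{jk}·D(z,w)_{il} − δ_{il}·D(z,w)_{kj} in R[z,w], where the bracket is extended ℂ[z,w]-bilinearly. -/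

import Mathlib

open MvPolynomial

/-- The Lie–Poisson bracket on the coordinate ring `R = ℂ[X_{m,i,j}]` of `n` copies of
`gl_r*`: `{F, G} = Σ_{m,i,j,k,l} (∂F/∂X_{m,i,j})(∂G/∂X_{m,k,l})(δ_{jk} X_{m,i,l} - δ_{il} X_{m,k,j})`. -/
noncomputable def liePoissonBracket (n r : ℕ)
    (F G : MvPolynomial (Fin n × Fin r × Fin r) ℂ) :
    MvPolynomial (Fin n × Fin r × Fin r) ℂ :=
  ∑ m : Fin n, ∑ i : Fin r, ∑ j : Fin r, ∑ k : Fin r, ∑ l : Fin r,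
    pderiv (m, i, j) F * pderiv (m, k, l) G *
      ((if j = k then X (m, i, l) else 0) - (if i = l then X (m, k, j) else 0))


lemma pderiv_sum_CX (n r : ℕ) (a : Fin n → ℂ) (i j : Fin r) (u : Fin n × Fin r × Fin r) :
    pderiv u (∑ m : Fin n, C (a m) * X (m, i, j)) =
      if u.2.1 = i ∧ u.2.2 = j then C (a u.1) else 0 := by
  obtain ⟨m', i', j'⟩ := u
  rw [map_sum]
  simp only [pderiv_C_mul, pderiv_X, Pi.single_apply, Prod.mk.injEq, mul_ite, mul_one, mul_zero]
  simp only [ite_and, Finset.sum_ite_eq', Finset.mem_univ, if_true]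
  simp [eq_comm]

lemma lpb_sums (n r : ℕ) (a b : Fin n → ℂ) (i j k l : Fin r) :
    liePoissonBracket n r (∑ m : Fin n, C (a m) * X (m, i, j))
        (∑ m : Fin n, C (b m) * X (m, k, l)) =
      ∑ m : Fin n, C (a m) * C (b m) *
        ((if j = k then X (m, i, l) else 0) - (if i = l then X (m, k, j) else 0)) := by
  unfold liePoissonBracket
  simp only [pderiv_sum_CX]
  simp only [ite_and, ite_mul, zero_mul, mul_ite, mul_zero,
    Finset.sum_ite_eq, Finset.sum_ite_eq', Finset.mem_univ, if_true]
  simp [Finset.sum_ite_eq, Finset.sum_ite_eq']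

/-- The matrix `Δ(z,w)` encodes the Poisson brackets of the entries of the Higgs field:
in cleared-denominator form, every entry of `P(w)Φ(z) - P(z)Φ(w)` is divisible by `w - z`,
and the entrywise quotient `D(z,w)` satisfies
`{Φ(z)_{ij}, Φ(w)_{kl}} = δ_{jk} D(z,w)_{il} - δ_{il} D(z,w)_{kj}`
(as an identity of coefficients of `z^c w^d`, where bivariate polynomials are represented
as elements of `(R[z])[w]`, the inner variable being `z` and the outer one `w`). -/
theorem higgs_entries_poisson_bracket (n r : ℕ) (hn : 1 ≤ n) (hrr : 1 ≤ r)
    (p : Fin n → ℂ) (hp : Function.Injective p)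
    (P : Polynomial (MvPolynomial (Fin n × Fin r × Fin r) ℂ))
    (hP : P = ∏ i : Fin n,
        (Polynomial.X - Polynomial.C (C (p i) : MvPolynomial (Fin n × Fin r × Fin r) ℂ)))
    (Φ : Matrix (Fin r) (Fin r) (Polynomial (MvPolynomial (Fin n × Fin r × Fin r) ℂ)))
    (hΦ : Φ = ∑ m : Fin n,
        (∏ j ∈ Finset.univ.erase m,
          (Polynomial.X - Polynomial.C (C (p j) : MvPolynomial (Fin n × Fin r × Fin r) ℂ))) •
          Matrix.of (fun i k : Fin r =>
            (Polynomial.C (X (m, i, k)) :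
              Polynomial (MvPolynomial (Fin n × Fin r × Fin r) ℂ)))) :
    ∃ D : Matrix (Fin r) (Fin r)
        (Polynomial (Polynomial (MvPolynomial (Fin n × Fin r × Fin r) ℂ))),
      (∀ i j : Fin r,
          P.map (Polynomial.C) * Polynomial.C (Φ i j) -
              Polynomial.C P * (Φ i j).map (Polynomial.C) =
            (Polynomial.X - Polynomial.C Polynomial.X) * D i j) ∧
        ∀ i j k l : Fin r, ∀ c d : ℕ,
          liePoissonBracket n r ((Φ i j).coeff c) ((Φ k l).coeff d) =
            (((if j = k then D i l else 0) - (if i = l then D k j else 0)).coeff d).coeff c := by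
  set R' := MvPolynomial (Fin n × Fin r × Fin r) ℂ
  set Q : Fin n → Polynomial R' := fun m =>
    ∏ j ∈ Finset.univ.erase m, (Polynomial.X - Polynomial.C (C (p j))) with hQ
  set q : Fin n → Polynomial ℂ := fun m =>
    ∏ j ∈ Finset.univ.erase m, (Polynomial.X - Polynomial.C (p j)) with hq
  have hQq : ∀ m, Q m = (q m).map (C : ℂ →+* R') := by
    intro m
    simp [hQ, hq, Polynomial.map_prod, Polynomial.map_sub]
  have hPm : ∀ m : Fin n, P = (Polynomial.X - Polynomial.C (C (p m))) * Q m := by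
    intro m
    rw [hP, ← Finset.mul_prod_erase _ _ (Finset.mem_univ m)]
  have hΦ' : ∀ i j : Fin r, Φ i j = ∑ m : Fin n, Q m * Polynomial.C (X (m, i, j)) := by
    intro i j
    rw [hΦ]
    simp [Matrix.sum_apply, Matrix.smul_apply, smul_eq_mul]
    rfl
  have hcoeff : ∀ (i j : Fin r) (c : ℕ),
      (Φ i j).coeff c = ∑ m : Fin n, C ((q m).coeff c) * X (m, i, j) := by
    intro i j c
    rw [hΦ' i j, Polynomial.finset_sum_coeff]
    refine Finset.sum_congr rfl fun m _ => ?_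
    rw [Polynomial.coeff_mul_C, hQq, Polynomial.coeff_map]
  refine ⟨fun i j => ∑ m : Fin n,
    ((Q m).map Polynomial.C) * Polynomial.C (Q m * Polynomial.C (X (m, i, j))), ?_, ?_⟩
  · intro i j
    rw [hΦ' i j]
    rw [map_sum (Polynomial.C : Polynomial R' →+* _), Polynomial.map_sum,
      Finset.mul_sum, Finset.mul_sum, Finset.mul_sum]
    rw [← Finset.sum_sub_distrib (G := Polynomial (Polynomial R'))]
    refine Finset.sum_congr rfl fun m _ => ?_
    rw [hPm m]
    simp only [Polynomial.map_mul, Polynomial.map_sub, Polynomial.map_X, Polynomial.map_C,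
      map_mul, map_sub]
    ring
  · intro i j k l c d
    have hD : ∀ (i j : Fin r),
        (((∑ m : Fin n, ((Q m).map Polynomial.C) *
            Polynomial.C (Q m * Polynomial.C (X (m, i, j)))).coeff d).coeff c) =
          ∑ m : Fin n, C ((q m).coeff c) * C ((q m).coeff d) * X (m, i, j) := by
      intro i j
      rw [Polynomial.finset_sum_coeff, Polynomial.finset_sum_coeff]
      refine Finset.sum_congr rfl fun m _ => ?_
      simp only [hQq, Polynomial.coeff_mul_C, Polynomial.coeff_map, Polynomial.coeff_C_mul]
      ring
    rw [hcoeff, hcoeff, lpb_sums]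
    split_ifs with h1 h2 h2
    · simp only [Polynomial.coeff_sub, hD, ← Finset.sum_sub_distrib]
      exact Finset.sum_congr rfl fun m _ => by ring
    · simp only [Polynomial.coeff_sub, Polynomial.coeff_zero, hD, sub_zero]
    · simp only [Polynomial.coeff_sub, Polynomial.coeff_zero, Polynomial.coeff_neg, hD,
        zero_sub, ← Finset.sum_neg_distrib]
      exact Finset.sum_congr rfl fun m _ => by ring
    · simp
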